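/- Duality of the deformed bases: for all partitions \lambda, \mu, one has {}_{[\alpha,\beta]}\langle \mu | \lambda \rangle_{[\alpha,\beta]} = \delta_{\lambda\mu}; equivalently, the determinant det[h_{\lambda_i - \mu_j - i + j}((A_{\mu_j} \sqcup B_{i-1})/(A_{\lambda_i - 1} \sqcup B_{j-1}))]_{i,j=1}^{\ell} equals \delta_{\lambda\mu} for any \ell \geq \ell(\lambda), \ell(\mu). -/

import Mathlib

open scoped Classical

/-- The elementary symmetric function `e_k` of a list of variables. -/
noncomputable def eList {R : Type*} [CommRing R] (x : List R) (k : ℕ) : R :=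
  ((x.sublistsLen k).map List.prod).sum

/-- The complete homogeneous symmetric function `h_k` of a list of variables. -/
noncomputable def hList {R : Type*} [CommRing R] (x : List R) (k : ℕ) : R :=
  ∑ m ∈ (Finset.univ : Finset (Fin x.length)).sym k, (m.1.map x.get).prod

/-- The supersymmetric complete homogeneous function
`h_m(x/y) = ∑_{k=0}^m (-1)^{m-k} h_k(x) e_{m-k}(y)` of two lists of variables. -/
noncomputable def hSuperList {R : Type*} [CommRing R] (x y : List R) (m : ℕ) : R :=
  ∑ k ∈ Finset.range (m + 1), (-1 : R) ^ (m - k) * hList x k * eList y (m - k)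

/-- `h_m(x/y)` for an integer index `m`, vanishing for `m < 0`. -/
noncomputable def hSuperListZ {R : Type*} [CommRing R] (x y : List R) (m : ℤ) : R :=
  if 0 ≤ m then hSuperList x y m.toNat else 0

/-- The alphabet `A_i = {-α_1, …, -α_i}`. -/
noncomputable def AAlph {R : Type*} [CommRing R] (α : ℕ → R) (i : ℕ) : List R :=
  (List.range i).map fun t => -α (t + 1)

/-- The alphabet `B_i = {β_1, …, β_i}`. -/
noncomputable def BAlph {R : Type*} [CommRing R] (β : ℕ → R) (i : ℕ) : List R :=
  (List.range i).map fun t => β (t + 1)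

set_option linter.unusedSectionVars false

section Aux
variable {R : Type*} [CommRing R]

lemma eList_zero (x : List R) : eList x 0 = 1 := by
  simp [eList, List.sublistsLen_zero]

lemma eList_nil (k : ℕ) : eList ([] : List R) (k+1) = 0 := by
  simp [eList]

lemma eList_cons (a : R) (x : List R) (k : ℕ) :
    eList (a :: x) (k+1) = eList x (k+1) + a * eList x k := by
  simp only [eList, List.sublistsLen_succ_cons, List.map_append, List.sum_append, List.map_map]
  rw [← List.sum_map_mul_left]
  simp [Function.comp_def]

lemma eList_of_length_lt (x : List R) {k : ℕ} (h : x.length < k) : eList x k = 0 := by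
  simp [eList, List.sublistsLen_of_length_lt h]

lemma hList_zero (x : List R) : hList x 0 = 1 := by
  simp [hList, Finset.sym_zero]
  rfl

lemma hList_nil (k : ℕ) : hList ([] : List R) (k+1) = 0 := by
  rw [hList]
  rw [show (Finset.univ : Finset (Fin ([] : List R).length)) = ∅ by simp]
  rw [Finset.sym_empty]
  simp

lemma hList_sym (x : List R) (k : ℕ) :
    hList x k = ∑ m : Sym (Fin x.length) k, (m.1.map x.get).prod := by
  rw [hList, Finset.sym_univ]

lemma sym_sum_cons (n k : ℕ) (g : Fin (n+1) → R) :
    ∑ m : Sym (Fin (n+1)) (k+1), ((m.1.map g).prod : R)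
      = g 0 * (∑ m : Sym (Fin (n+1)) k, (m.1.map g).prod)
        + ∑ m : Sym (Fin n) (k+1), (m.1.map (g ∘ Fin.succ)).prod := by
  classical
  rw [← Finset.sum_filter_add_sum_filter_not Finset.univ (fun m => (0 : Fin (n+1)) ∈ m)]
  congr 1
  · rw [Finset.mul_sum]
    refine Finset.sum_bij' (fun m hm => m.erase 0 (by simpa using hm))
      (fun m _ => Sym.cons 0 m) (fun m hm => Finset.mem_univ _)
      (fun m hm => by simp [Sym.mem_cons]) (fun m hm => Sym.cons_erase _)
      (fun m hm => Sym.erase_cons_head _ _) ?_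
    intro m hm
    have h0 : (0 : Fin (n+1)) ∈ m := by simpa using hm
    conv_lhs => rw [← Sym.cons_erase h0]
    have hc : ((0 ::ₛ m.erase 0 h0 : Sym (Fin (n+1)) (k+1))).1
        = 0 ::ₘ (m.erase 0 h0).1 := rfl
    rw [hc, Multiset.map_cons, Multiset.prod_cons]
  · rcases Nat.eq_zero_or_pos n with hn | hn
    · subst hn
      have h1 : ∀ m : Sym (Fin 1) (k+1), (0 : Fin 1) ∈ m := by
        intro m
        obtain ⟨t, ht⟩ := Sym.exists_mem m
        rwa [Subsingleton.elim t 0] at ht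
      rw [Finset.filter_false_of_mem (fun m _ => by simpa using h1 m)]
      have : IsEmpty (Sym (Fin 0) (k+1)) := by
        constructor; intro m
        obtain ⟨t, _⟩ := Sym.exists_mem m
        exact t.elim0
      simp
    · set lower : Fin (n+1) → Fin n := fun t => ⟨t.1 - 1, by omega⟩ with hlow
      refine (Finset.sum_bij' (fun (m : Sym (Fin n) (k+1)) (_ : m ∈ Finset.univ) =>
          m.map Fin.succ) (fun m _ => m.map lower) ?_ (fun m _ => Finset.mem_univ _) ?_ ?_ ?_).symm
      · intro m _
        simp only [Finset.mem_filter, Finset.mem_univ, true_and]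
        intro h0
        rw [Sym.mem_map] at h0
        obtain ⟨b, _, hb⟩ := h0
        exact Fin.succ_ne_zero b hb
      · intro m _
        simp only [Sym.map_map]
        have : ∀ t ∈ m, (lower ∘ Fin.succ) t = t := by
          intro t _
          simp only [Function.comp_apply, hlow]
          ext
          simp
        rw [Sym.map_congr this, Sym.map_id']
      · intro m hm
        have h0 : (0 : Fin (n+1)) ∉ m := by simpa using (Finset.mem_filter.mp hm).2
        simp only [Sym.map_map]
        have : ∀ t ∈ m, (Fin.succ ∘ lower) t = t := by
          intro t ht
          have ht0 : t ≠ 0 := fun h => h0 (h ▸ ht)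
          simp only [Function.comp_apply, hlow]
          ext
          simp only [Fin.val_succ]
          have : t.1 ≠ 0 := fun h => ht0 (Fin.ext h)
          omega
        rw [Sym.map_congr this, Sym.map_id']
      · intro m _
        simp [Sym.coe_map, Multiset.map_map, Function.comp]

lemma hList_cons (a : R) (x : List R) (k : ℕ) :
    hList (a :: x) (k+1) = a * hList (a :: x) k + hList x (k+1) := by
  rw [hList_sym, hList_sym, hList_sym]
  refine (sym_sum_cons x.length k ((a :: x).get : Fin (x.length + 1) → R)).trans ?_
  have h1 : (a :: x).get (0 : Fin (x.length + 1)) = a := rfl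
  have h2 : ((a :: x).get ∘ Fin.succ : Fin x.length → R) = x.get := by
    funext i
    simp [Function.comp]
  rw [h1, h2]
  rfl

open PowerSeries in
noncomputable def Epoly (x : List R) : PowerSeries R :=
  (x.map fun a => 1 - PowerSeries.C a * PowerSeries.X).prod

noncomputable def Hser (x : List R) : PowerSeries R := PowerSeries.mk (hList x)

lemma Epoly_nil : Epoly ([] : List R) = 1 := by simp [Epoly]

lemma Epoly_cons (a : R) (x : List R) :
    Epoly (a :: x) = (1 - PowerSeries.C a * PowerSeries.X) * Epoly x := by
  simp [Epoly]

lemma Epoly_append (x y : List R) : Epoly (x ++ y) = Epoly x * Epoly y := by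
  simp [Epoly]

lemma coeff_one_sub_C_mul_X (a : R) (f : PowerSeries R) (k : ℕ) :
    PowerSeries.coeff k ((1 - PowerSeries.C a * PowerSeries.X) * f)
      = PowerSeries.coeff k f - a * (if k = 0 then 0 else PowerSeries.coeff (k-1) f) := by
  rw [sub_mul, one_mul, map_sub, mul_assoc, PowerSeries.coeff_C_mul]
  cases k with
  | zero => simp [PowerSeries.coeff_zero_X_mul]
  | succ n => simp [PowerSeries.coeff_succ_X_mul]

lemma coeff_Epoly (x : List R) (k : ℕ) :
    PowerSeries.coeff k (Epoly x) = (-1 : R)^k * eList x k := by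
  induction x generalizing k with
  | nil =>
    rw [Epoly_nil, PowerSeries.coeff_one]
    cases k with
    | zero => simp [eList_zero]
    | succ n => simp [eList_nil]
  | cons a x ih =>
    rw [Epoly_cons, coeff_one_sub_C_mul_X, ih]
    cases k with
    | zero => simp [eList_zero]
    | succ n =>
      rw [if_neg (Nat.succ_ne_zero n), Nat.succ_sub_one, ih, eList_cons, pow_succ]
      ring

lemma Hser_nil : Hser ([] : List R) = 1 := by
  apply PowerSeries.ext
  intro n
  rw [Hser, PowerSeries.coeff_mk, PowerSeries.coeff_one]
  cases n with
  | zero => simp [hList_zero]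
  | succ n => simp [hList_nil]

lemma one_sub_mul_Hser (a : R) (x : List R) :
    (1 - PowerSeries.C a * PowerSeries.X) * Hser (a :: x) = Hser x := by
  apply PowerSeries.ext
  intro n
  rw [coeff_one_sub_C_mul_X, Hser, Hser, PowerSeries.coeff_mk, PowerSeries.coeff_mk]
  cases n with
  | zero => simp [hList_zero]
  | succ n =>
    rw [if_neg (Nat.succ_ne_zero n), Nat.succ_sub_one, PowerSeries.coeff_mk, hList_cons]
    ring

lemma Epoly_mul_Hser (x : List R) : Epoly x * Hser x = 1 := by
  induction x with
  | nil => rw [Epoly_nil, Hser_nil, one_mul]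
  | cons a x ih =>
    rw [Epoly_cons, mul_comm (1 - PowerSeries.C a * PowerSeries.X) (Epoly x), mul_assoc,
      one_sub_mul_Hser, ih]


lemma hSuperList_coeff (x y : List R) (m : ℕ) :
    hSuperList x y m = PowerSeries.coeff m (Hser x * Epoly y) := by
  rw [PowerSeries.coeff_mul, Finset.Nat.sum_antidiagonal_eq_sum_range_succ_mk, hSuperList]
  apply Finset.sum_congr rfl
  intro k _
  rw [Hser, PowerSeries.coeff_mk, coeff_Epoly]
  ring

lemma hSuperList_split (x y z : List R) (h : Epoly y = Epoly x * Epoly z) (m : ℕ) :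
    hSuperList x y m = (-1 : R)^m * eList z m := by
  rw [hSuperList_coeff, h, ← mul_assoc, mul_comm (Hser x) (Epoly x), Epoly_mul_Hser, one_mul,
    coeff_Epoly]

lemma hSuperList_zero (x y : List R) : hSuperList x y 0 = 1 := by
  simp [hSuperList, hList_zero, eList_zero]



lemma rangeMap_split (g : ℕ → R) {k n : ℕ} (h : k ≤ n) :
    (List.range n).map g
      = (List.range k).map g ++ (List.range (n - k)).map (fun t => g (k + t)) := by
  conv_lhs => rw [show n = k + (n - k) by omega, List.range_add]
  rw [List.map_append, List.map_map]
  rfl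

lemma Epoly_AAlph_split (α : ℕ → R) {k n : ℕ} (h : k ≤ n) :
    Epoly (AAlph α n)
      = Epoly (AAlph α k) * Epoly ((List.range (n - k)).map fun t => -α (k + t + 1)) := by
  rw [← Epoly_append, AAlph, AAlph, rangeMap_split (fun t => -α (t + 1)) h]

lemma Epoly_BAlph_split (β : ℕ → R) {k n : ℕ} (h : k ≤ n) :
    Epoly (BAlph β n)
      = Epoly (BAlph β k) * Epoly ((List.range (n - k)).map fun t => β (k + t + 1)) := by
  rw [← Epoly_append, BAlph, BAlph, rangeMap_split (fun t => β (t + 1)) h]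

lemma entry_vanish (α β : ℕ → R) {mj li i j : ℕ} (h1 : mj < li) (h2 : i ≤ j) {d : ℕ}
    (hd : (li - 1 - mj) + (j - i) < d) :
    hSuperList (AAlph α mj ++ BAlph β i) (AAlph α (li - 1) ++ BAlph β j) d = 0 := by
  set zA : List R := (List.range (li - 1 - mj)).map fun t => -α (mj + t + 1) with hzA
  set zB : List R := (List.range (j - i)).map fun t => β (i + t + 1) with hzB
  have hsplit : Epoly (AAlph α (li - 1) ++ BAlph β j)
      = Epoly (AAlph α mj ++ BAlph β i) * Epoly (zA ++ zB) := by
    rw [Epoly_append, Epoly_append, Epoly_append,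
      Epoly_AAlph_split α (show mj ≤ li - 1 by omega),
      Epoly_BAlph_split β h2]
    ring
  rw [hSuperList_split _ _ _ hsplit d, eList_of_length_lt, mul_zero]
  simpa [hzA, hzB] using hd

lemma det_zero_block {L : ℕ} (M : Matrix (Fin L) (Fin L) R) (r : Fin L)
    (h : ∀ i j : Fin L, i ≤ r → r ≤ j → M i j = 0) : M.det = 0 := by
  rw [Matrix.det_apply]
  apply Finset.sum_eq_zero
  intro σ _
  have hex : ∃ j : Fin L, r ≤ j ∧ σ j ≤ r := by
    by_contra hc
    push_neg at hc
    have hsub : (Finset.Ici r).image σ ⊆ Finset.Ioi r := by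
      intro x hx
      rw [Finset.mem_image] at hx
      obtain ⟨j, hj, rfl⟩ := hx
      exact Finset.mem_Ioi.mpr (hc j (Finset.mem_Ici.mp hj))
    have hcard : (Finset.Ici r).card ≤ (Finset.Ioi r).card := by
      calc (Finset.Ici r).card = ((Finset.Ici r).image σ).card :=
            (Finset.card_image_of_injective _ σ.injective).symm
        _ ≤ _ := Finset.card_le_card hsub
    have hss : Finset.Ioi r ⊂ Finset.Ici r := by
      refine ⟨fun x hx => Finset.mem_Ici.mpr (le_of_lt (Finset.mem_Ioi.mp hx)), fun hsub2 => ?_⟩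
      exact lt_irrefl r (Finset.mem_Ioi.mp (hsub2 (Finset.mem_Ici.mpr le_rfl)))
    exact absurd hcard (not_le.mpr (Finset.card_lt_card hss))
  obtain ⟨j, hj1, hj2⟩ := hex
  rw [Finset.prod_eq_zero (i := j) (f := fun i => M (σ i) i) (Finset.mem_univ j)
    (h (σ j) j hj2 hj1), smul_zero]

end Aux

/-- Duality of the `(α,β)`-deformed bases:
`det[h_{λ_i-μ_j-i+j}((A_{μ_j} ⊔ B_{i-1})/(A_{λ_i-1} ⊔ B_{j-1}))]_{i,j=1}^ℓ = δ_{λμ}`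
for any `ℓ ≥ ℓ(λ), ℓ(μ)`.  Rows of the matrix are `0`-indexed, so our row `i`
is the paper's row `i+1` (whence `B_{i-1}` becomes `BAlph β i`). -/
theorem deformed_basis_duality {R : Type*} [CommRing R] (α β : ℕ → R)
    (l m : ℕ → ℕ) (hl : Antitone l) (hm : Antitone m)
    (L : ℕ) (hLl : ∀ n, L ≤ n → l n = 0) (hLm : ∀ n, L ≤ n → m n = 0) :
    Matrix.det (Matrix.of fun i j : Fin L =>
        hSuperListZ (AAlph α (m j) ++ BAlph β i) (AAlph α (l i - 1) ++ BAlph β j)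
          ((l i : ℤ) - m j - (i : ℕ) + (j : ℕ)))
      = if (∀ n, l n = m n) then 1 else 0 := by
  by_cases heq : ∀ n, l n = m n
  · rw [if_pos heq]
    have htri : Matrix.BlockTriangular (Matrix.of fun i j : Fin L =>
        hSuperListZ (AAlph α (m j) ++ BAlph β i) (AAlph α (l i - 1) ++ BAlph β j)
          ((l i : ℤ) - m j - (i : ℕ) + (j : ℕ))) id := by
      intro i j hji
      simp only [Matrix.of_apply, hSuperListZ]
      rw [if_neg]
      have h1 : l (i : ℕ) ≤ l (j : ℕ) := hl (le_of_lt hji)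
      have h2 : m (j : ℕ) = l (j : ℕ) := (heq j).symm
      have h3 : (j : ℕ) < (i : ℕ) := hji
      omega
    rw [Matrix.det_of_upperTriangular htri]
    apply Finset.prod_eq_one
    intro i _
    simp only [Matrix.of_apply, hSuperListZ]
    have hd : ((l (i:ℕ) : ℤ) - m (i:ℕ) - (i : ℕ) + (i : ℕ)) = 0 := by rw [heq (i:ℕ)]; ring
    rw [hd, if_pos le_rfl]
    exact hSuperList_zero _ _
  · rw [if_neg heq]
    push_neg at heq
    obtain ⟨r, hr⟩ := heq
    have hrL : r < L := by
      by_contra h'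
      exact hr (by rw [hLl r (not_lt.mp h'), hLm r (not_lt.mp h')])
    rcases lt_or_gt_of_ne hr with hA | hB
    · -- l r < m r : rows ≥ r, cols ≤ r vanish; use transpose
      rw [← Matrix.det_transpose]
      apply det_zero_block _ ⟨r, hrL⟩
      intro i j hi hj
      have hi' : (i : ℕ) ≤ r := hi
      have hj' : r ≤ (j : ℕ) := hj
      have h1 : l (j : ℕ) ≤ l r := hl hj'
      have h2 : m r ≤ m (i : ℕ) := hm hi'
      simp only [Matrix.transpose_apply, Matrix.of_apply, hSuperListZ]
      rw [if_neg]
      omega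
    · -- l r > m r : rows ≤ r, cols ≥ r vanish by supersymmetric cancellation
      apply det_zero_block _ ⟨r, hrL⟩
      intro i j hi hj
      have hi' : (i : ℕ) ≤ r := hi
      have hj' : r ≤ (j : ℕ) := hj
      have h1 : l r ≤ l (i : ℕ) := hl hi'
      have h2 : m (j : ℕ) ≤ m r := hm hj'
      have hij : (i : ℕ) ≤ (j : ℕ) := le_trans hi' hj'
      have hml : m (j : ℕ) < l (i : ℕ) := by omega
      simp only [Matrix.of_apply, hSuperListZ]
      rw [if_pos (by omega)]
      apply entry_vanish α β hml hij
      omega
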